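/- Let α = 1/2 and p₀ < 0. For every h < 0 such that the level set {½v² + V(u) = h} is a nontrivial closed orbit in the period annulus (i.e., 0 > h > V((-p₀)^{-2})), the period T_p(h) = √2 ∫_{u⁻(h)}^{u⁺(h)} du/√(h - V(u)) equals the constant 2√2·π·(-p₀)^{-3/2}, where u⁻(h) < u⁺(h) are the two positive roots of V(u) = h. -/

import Mathlib

open Real Filter Set Topology intervalIntegral

theorem stmt5 (p₀ h um up : ℝ) (hp : p₀ < 0)
    (V : ℝ → ℝ) (hV : ∀ u : ℝ, V u = -p₀ * u - 2 * Real.sqrt u)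
    (hcenter : 1 / p₀ < h) (hneg : h < 0)
    (hum : 0 < um) (hlt : um < up)
    (hroot1 : V um = h) (hroot2 : V up = h) :
    Real.sqrt 2 * ∫ u in um..up, 1 / Real.sqrt (h - V u)
      = 2 * Real.sqrt 2 * π * (-p₀) ^ (-(3/2) : ℝ) := by
  have ha : (0:ℝ) < -p₀ := by linarith
  set a : ℝ := -p₀ with ha_def
  have hup0 : 0 < up := hum.trans hlt
  have hs1p : 0 < Real.sqrt um := Real.sqrt_pos.mpr hum
  have hs2p : 0 < Real.sqrt up := Real.sqrt_pos.mpr hup0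
  set s₁ : ℝ := Real.sqrt um with hs1
  set s₂ : ℝ := Real.sqrt up with hs2
  have hs1sq : s₁ ^ 2 = um := Real.sq_sqrt hum.le
  have hs2sq : s₂ ^ 2 = up := Real.sq_sqrt hup0.le
  have hs12 : s₁ < s₂ := Real.sqrt_lt_sqrt hum.le hlt
  have e1 : a * s₁ ^ 2 - 2 * s₁ = h := by
    have h1 := hroot1
    rw [hV um] at h1
    rw [← hs1] at h1
    rw [hs1sq]
    linarith [h1]
  have e2 : a * s₂ ^ 2 - 2 * s₂ = h := by
    have h2 := hroot2
    rw [hV up] at h2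
    rw [← hs2] at h2
    rw [hs2sq]
    linarith [h2]
  have hvieta : a * (s₁ + s₂) = 2 := by
    have key : (s₁ - s₂) * (a * (s₁ + s₂) - 2) = 0 := by linear_combination e1 - e2
    rcases mul_eq_zero.mp key with h' | h'
    · exfalso; have : s₁ ≠ s₂ := ne_of_lt hs12; exact this (by linarith)
    · linarith
  set c : ℝ := 1 / a with hc
  set R : ℝ := (s₂ - s₁) / 2 with hR
  have hRp : 0 < R := by rw [hR]; linarith
  have hane : a ≠ 0 := ne_of_gt ha
  have hac : a * c = 1 := by rw [hc]; field_simp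
  have hcs : s₁ + s₂ = 2 * c := by
    have : a * (s₁ + s₂) = a * (2 * c) := by
      rw [hvieta]; linear_combination -2 * hac
    exact mul_left_cancel₀ hane this
  have hs1c : s₁ = c - R := by rw [hR]; linarith
  have hs2c : s₂ = c + R := by rw [hR]; linarith
  have e1' : a * (c - R) ^ 2 - 2 * (c - R) = h := by rw [← hs1c]; exact e1
  have key : ∀ s : ℝ, h - (a * s ^ 2 - 2 * s) = a * (R ^ 2 - (s - c) ^ 2) := by
    intro s
    linear_combination -e1' + (2 * c - 2 * R - 2 * s) * hac
  -- rewrite h - V u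
  have hHV : ∀ u : ℝ, 0 ≤ u → h - V u = a * (R ^ 2 - (Real.sqrt u - c) ^ 2) := by
    intro u hu
    have hk := key (Real.sqrt u)
    rw [Real.sq_sqrt hu] at hk
    rw [hV u, ha_def] at *
    linarith [hk]
  -- the antiderivative
  set F : ℝ → ℝ := fun u => (2 / Real.sqrt a) *
      (c * Real.arcsin ((Real.sqrt u - c) / R) -
        Real.sqrt (R ^ 2 - (Real.sqrt u - c) ^ 2)) with hF
  have hFcont : Continuous F := by
    rw [hF]
    apply continuous_const.mul
    apply Continuous.sub
    · exact continuous_const.mul (Real.continuous_arcsin.comp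
        ((Real.continuous_sqrt.sub continuous_const).div_const R))
    · exact (continuous_const.sub
        ((Real.continuous_sqrt.sub continuous_const).pow 2)).sqrt
  have hsap : 0 < Real.sqrt a := Real.sqrt_pos.mpr ha
  -- the derivative
  have hderiv : ∀ u ∈ Ioo um up, HasDerivAt F (1 / Real.sqrt (h - V u)) u := by
    intro u hu
    have hu0 : 0 < u := hum.trans hu.1
    set s : ℝ := Real.sqrt u with hsdef
    have hsp : 0 < s := Real.sqrt_pos.mpr hu0
    have hlo : s₁ < s := Real.sqrt_lt_sqrt hum.le hu.1
    have hhi : s < s₂ := Real.sqrt_lt_sqrt hu0.le hu.2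
    have hlo' : c - R < s := by rw [← hs1c]; exact hlo
    have hhi' : s < c + R := by rw [← hs2c]; exact hhi
    have hin : 0 < R ^ 2 - (s - c) ^ 2 := by nlinarith
    have hB : 0 < Real.sqrt (R ^ 2 - (s - c) ^ 2) := Real.sqrt_pos.mpr hin
    have hds : HasDerivAt Real.sqrt (1 / (2 * s)) u := Real.hasDerivAt_sqrt hu0.ne'
    have hdx : HasDerivAt (fun u : ℝ => (Real.sqrt u - c) / R) ((1 / (2 * s)) / R) u :=
      (hds.sub_const c).div_const R
    have hxgt : -1 < (s - c) / R := by rw [lt_div_iff₀ hRp]; linarith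
    have hxlt : (s - c) / R < 1 := by rw [div_lt_one hRp]; linarith
    have hdarc : HasDerivAt (fun u : ℝ => Real.arcsin ((Real.sqrt u - c) / R))
        ((1 / Real.sqrt (1 - ((s - c) / R) ^ 2)) * ((1 / (2 * s)) / R)) u :=
      by have := (Real.hasDerivAt_arcsin (ne_of_gt hxgt) (ne_of_lt hxlt)).comp u hdx; exact this
    have hdg2 : HasDerivAt (fun u : ℝ => R ^ 2 - (Real.sqrt u - c) ^ 2)
        (-((2 : ℕ) * (s - c) ^ 1 * (1 / (2 * s)))) u :=
      ((hds.sub_const c).pow 2).const_sub (R ^ 2)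
    have hdsq : HasDerivAt (fun u : ℝ => Real.sqrt (R ^ 2 - (Real.sqrt u - c) ^ 2))
        ((-((2 : ℕ) * (s - c) ^ 1 * (1 / (2 * s)))) /
          (2 * Real.sqrt (R ^ 2 - (s - c) ^ 2))) u :=
      hdg2.sqrt (ne_of_gt hin)
    have hdF : HasDerivAt F ((2 / Real.sqrt a) *
        (c * ((1 / Real.sqrt (1 - ((s - c) / R) ^ 2)) * ((1 / (2 * s)) / R)) -
          (-((2 : ℕ) * (s - c) ^ 1 * (1 / (2 * s)))) /
            (2 * Real.sqrt (R ^ 2 - (s - c) ^ 2)))) u := by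
      rw [hF]
      exact ((hdarc.const_mul c).sub hdsq).const_mul (2 / Real.sqrt a)
    have hval : (2 / Real.sqrt a) *
        (c * ((1 / Real.sqrt (1 - ((s - c) / R) ^ 2)) * ((1 / (2 * s)) / R)) -
          (-((2 : ℕ) * (s - c) ^ 1 * (1 / (2 * s)))) /
            (2 * Real.sqrt (R ^ 2 - (s - c) ^ 2)))
        = 1 / Real.sqrt (h - V u) := by
      rw [hHV u hu0.le, ← hsdef]
      have h0 : 1 - ((s - c) / R) ^ 2 = (R ^ 2 - (s - c) ^ 2) / R ^ 2 := by
        field_simp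
      rw [h0, Real.sqrt_div hin.le, Real.sqrt_sq hRp.le,
        Real.sqrt_mul ha.le]
      have hBne : Real.sqrt (R ^ 2 - (s - c) ^ 2) ≠ 0 := ne_of_gt hB
      have hsane : Real.sqrt a ≠ 0 := ne_of_gt hsap
      have hsne : s ≠ 0 := ne_of_gt hsp
      have hRne : R ≠ 0 := ne_of_gt hRp
      push_cast
      field_simp
      ring
    rw [← hval]
    exact hdF
  have hnonneg : ∀ u ∈ Ioo um up, 0 ≤ 1 / Real.sqrt (h - V u) := by
    intro u _
    positivity
  have hint : IntervalIntegrable (fun u => 1 / Real.sqrt (h - V u)) MeasureTheory.volume um up := by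
    apply intervalIntegrable_deriv_of_nonneg (g := F) hFcont.continuousOn
    · intro x hx
      rw [min_eq_left hlt.le, max_eq_right hlt.le] at hx
      exact hderiv x hx
    · intro x hx
      rw [min_eq_left hlt.le, max_eq_right hlt.le] at hx
      exact hnonneg x hx
  have hI : ∫ u in um..up, 1 / Real.sqrt (h - V u) = F up - F um :=
    integral_eq_sub_of_hasDeriv_right_of_le hlt.le hFcont.continuousOn
      (fun x hx => (hderiv x hx).hasDerivWithinAt) hint
  -- endpoint values
  have hFum : F um = (2 / Real.sqrt a) * (c * (-(π / 2))) := by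
    rw [hF]
    simp only
    rw [← hs1, hs1c]
    have h1 : (c - R - c) / R = -1 := by field_simp; ring
    have h2 : R ^ 2 - (c - R - c) ^ 2 = 0 := by ring
    rw [h1, h2, Real.arcsin_neg_one, Real.sqrt_zero, sub_zero]
  have hFup : F up = (2 / Real.sqrt a) * (c * (π / 2)) := by
    rw [hF]
    simp only
    rw [← hs2, hs2c]
    have h1 : (c + R - c) / R = 1 := by field_simp; ring
    have h2 : R ^ 2 - (c + R - c) ^ 2 = 0 := by ring
    rw [h1, h2, Real.arcsin_one, Real.sqrt_zero, sub_zero]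
  -- power identity
  have hsa2 : Real.sqrt a * Real.sqrt a = a := Real.mul_self_sqrt ha.le
  have hpow : a ^ (-(3/2) : ℝ) = 1 / (a * Real.sqrt a) := by
    rw [Real.rpow_neg ha.le, show (3/2 : ℝ) = 1 + 1/2 by norm_num,
      Real.rpow_add ha, Real.rpow_one, ← Real.sqrt_eq_rpow, one_div]
  rw [hI, hFum, hFup, hpow, hc]
  have hsane : Real.sqrt a ≠ 0 := ne_of_gt hsap
  field_simp
  ring
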